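/- The Dirichlet series identity ∑_{δ,a ≥ 1} s_δ(a)/(δ^s a^t) = ζ(s+t−2)·ζ(s)·ζ(t)·ζ(t−1)/ζ(s+t) holds as an identity of formal double Dirichlet series, where s_δ(a) = ∑_{d|δ} J₂(d)·σ̄^d(a). -/

import Mathlib

open Finset

/-- The second Jordan totient `J₂ = μ * Id²`, whose Dirichlet series is `ζ(s−2)/ζ(s)`. -/
def J2 (n : ℕ) : ℤ := ∑ d ∈ n.divisors, ArithmeticFunction.moebius d * ((n / d : ℕ) : ℤ) ^ 2

/-- `σ̄^d(a) = σ(a/d)` if `d ∣ a`, and `0` otherwise; its Dirichlet series in `a` is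
`d^(−s)·ζ(s)ζ(s−1)`. -/
def sigmaBar (d a : ℕ) : ℤ := if d ∣ a then ∑ e ∈ (a / d).divisors, (e : ℤ) else 0

/-- `s_δ(a) = ∑_{d ∣ δ} J₂(d)·σ̄^d(a)`. -/
def sLocal (δ a : ℕ) : ℤ := ∑ d ∈ δ.divisors, J2 d * sigmaBar d a

lemma J2_eq (d : ℕ) :
    J2 d = ∑ p ∈ d.divisorsAntidiagonal,
      (ArithmeticFunction.moebius p.1 : ℤ) * (p.2 : ℤ) ^ 2 := by
  rw [J2, ← Nat.sum_divisorsAntidiagonal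
    (fun x y => (ArithmeticFunction.moebius x : ℤ) * (y : ℤ) ^ 2)]

/-- The formal double Dirichlet series identity
`∑_{δ,a} s_δ(a)/(δ^s a^t) = ζ(s+t−2)·ζ(s)·ζ(t)·ζ(t−1)/ζ(s+t)`, stated as an
identity of all coefficients: the coefficient of `1/(δ^s a^t)` on the right is
obtained by convolving `ζ(s+t−2) = ∑_n n²/(n^s n^t)`, `1/ζ(s+t) = ∑_x μ(x)/(x^s x^t)`,
`ζ(s) = ∑_u 1/u^s`, `ζ(t−1) = ∑_w w/w^t` and `ζ(t) = ∑_v 1/v^t`, i.e. summing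
`n²·μ(x)·w` over all factorizations `δ = n·x·u`, `a = n·x·w·v`. -/
theorem sLocal_dirichlet_series (δ a : ℕ) (hδ : 0 < δ) (ha : 0 < a) :
    sLocal δ a
      = ∑ n ∈ (Nat.gcd δ a).divisors,
          ∑ x ∈ (Nat.gcd (δ / n) (a / n)).divisors,
            ∑ w ∈ (a / (n * x)).divisors,
              (n : ℤ) ^ 2 * ArithmeticFunction.moebius x * (w : ℤ) := by
  have hg : Nat.gcd δ a ≠ 0 := Nat.gcd_ne_zero_left hδ.ne'
  have hfilter : δ.divisors.filter (· ∣ a) = (Nat.gcd δ a).divisors := by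
    ext d
    simp only [Finset.mem_filter, Nat.mem_divisors, Nat.dvd_gcd_iff, hδ.ne', hg,
      not_false_iff, and_true]
    have hδ' : δ ≠ 0 := hδ.ne'
    tauto
  have step1 : sLocal δ a
      = ∑ d ∈ (Nat.gcd δ a).divisors, J2 d * ∑ w ∈ (a / d).divisors, (w : ℤ) := by
    rw [sLocal, ← hfilter, Finset.sum_filter]
    refine Finset.sum_congr rfl fun d _ => ?_
    simp only [sigmaBar]
    split_ifs <;> simp
  rw [step1]
  simp only [J2_eq, Finset.sum_mul]
  rw [Finset.sum_sigma', Finset.sum_sigma']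
  refine Finset.sum_nbij' (fun q => ⟨q.2.2, q.2.1⟩) (fun q => ⟨q.2 * q.1, (q.2, q.1)⟩)
    ?_ ?_ ?_ ?_ ?_
  · rintro ⟨d, x, n⟩ hq
    simp only [Finset.mem_sigma, Nat.mem_divisors, Nat.mem_divisorsAntidiagonal] at hq ⊢
    obtain ⟨⟨hdg, _⟩, hxn, hd0⟩ := hq
    have hn : n ∣ Nat.gcd δ a := dvd_trans (Dvd.intro_left x hxn) hdg
    have hnδ : n ∣ δ := hn.trans (Nat.gcd_dvd_left _ _)
    have hna : n ∣ a := hn.trans (Nat.gcd_dvd_right _ _)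
    have hdδ : d ∣ δ := hdg.trans (Nat.gcd_dvd_left _ _)
    have hda : d ∣ a := hdg.trans (Nat.gcd_dvd_right _ _)
    refine ⟨⟨hn, hg⟩, Nat.dvd_gcd ?_ ?_, ?_⟩
    · rw [Nat.dvd_div_iff_mul_dvd hnδ, mul_comm, hxn]; exact hdδ
    · rw [Nat.dvd_div_iff_mul_dvd hna, mul_comm, hxn]; exact hda
    · have : 0 < δ / n := Nat.div_pos (Nat.le_of_dvd hδ hnδ) (Nat.pos_of_dvd_of_pos hnδ hδ)
      exact fun h => this.ne' (Nat.eq_zero_of_gcd_eq_zero_left h)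
  · rintro ⟨n, x⟩ hq
    simp only [Finset.mem_sigma, Nat.mem_divisors, Nat.mem_divisorsAntidiagonal] at hq ⊢
    obtain ⟨⟨hn, _⟩, hx, _⟩ := hq
    have hnδ : n ∣ δ := hn.trans (Nat.gcd_dvd_left _ _)
    have hna : n ∣ a := hn.trans (Nat.gcd_dvd_right _ _)
    have hxδ : n * x ∣ δ :=
      (Nat.dvd_div_iff_mul_dvd hnδ).mp (hx.trans (Nat.gcd_dvd_left _ _))
    have hxa : n * x ∣ a :=
      (Nat.dvd_div_iff_mul_dvd hna).mp (hx.trans (Nat.gcd_dvd_right _ _))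
    have hnx : n * x ≠ 0 := fun h => hδ.ne' (Nat.eq_zero_of_zero_dvd (h ▸ hxδ))
    exact ⟨⟨Nat.dvd_gcd (by rwa [mul_comm] at hxδ) (by rwa [mul_comm] at hxa), hg⟩,
      trivial, by rwa [mul_comm] at hnx⟩
  · rintro ⟨d, x, n⟩ hq
    simp only [Finset.mem_sigma, Nat.mem_divisorsAntidiagonal] at hq
    obtain ⟨_, hxn, _⟩ := hq
    simp [hxn]
  · rintro ⟨n, x⟩ _; rfl
  · rintro ⟨d, x, n⟩ hq
    simp only [Finset.mem_sigma, Nat.mem_divisorsAntidiagonal] at hq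
    obtain ⟨_, hxn, _⟩ := hq
    simp only
    rw [Finset.mul_sum, ← hxn, mul_comm n x]
    exact Finset.sum_congr rfl fun w _ => by ring
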